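/- Tensor net lemma: Let N = n^d and K ⊆ B₂^N the absolute convex hull of the rank-one tensors {y₁ ⊗ ⋯ ⊗ y_d : y_j ∈ B₂^n}. Then there exist M points x₁,…,x_M of norm at most 1 (rank-one tensors), with ln M ≤ 3nd(1 + ln d), such that K ⊆ e · absconv{x₁,…,x_M}. -/

import Mathlib

open scoped Pointwise

/-- The rank-one tensor `y₁ ⊗ ⋯ ⊗ y_d ∈ ℝ^{n^d}`, realized as the element of
`EuclideanSpace ℝ (Fin d → Fin n)` with entries `(y₁)_{i₁} ⋯ (y_d)_{i_d}`. -/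
noncomputable def tensorProd (n d : ℕ) (y : Fin d → EuclideanSpace ℝ (Fin n)) :
    EuclideanSpace ℝ (Fin d → Fin n) :=
  (WithLp.equiv 2 ((Fin d → Fin n) → ℝ)).symm fun i => ∏ l, y l (i l)

/-- The absolute convex hull of a set: all finite combinations `Σ c_k • p_k`
with `p_k ∈ S` and `Σ |c_k| ≤ 1`. -/
def absConv {V : Type*} [AddCommGroup V] [Module ℝ V] (S : Set V) : Set V :=
  {z | ∃ (k : ℕ) (c : Fin k → ℝ) (p : Fin k → V),
    (∀ i, p i ∈ S) ∧ (∑ i, |c i|) ≤ 1 ∧ z = ∑ i, c i • p i}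

section Aux

open Metric MeasureTheory Finset ENNReal

lemma net_card_bound {n : ℕ} {ε : ℝ} (hε : 0 < ε) (s : Finset (EuclideanSpace ℝ (Fin n)))
    (hs : (s : Set (EuclideanSpace ℝ (Fin n))) ⊆ closedBall 0 1)
    (hsep : (s : Set (EuclideanSpace ℝ (Fin n))).Pairwise fun a b => ε < dist a b) :
    (s.card : ℝ) ≤ (1 + 2 / ε) ^ n := by
  set μ : Measure (EuclideanSpace ℝ (Fin n)) := volume
  set B := μ (ball (0 : EuclideanSpace ℝ (Fin n)) 1) with hB
  have hB0 : B ≠ 0 := (measure_ball_pos μ 0 one_pos).ne'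
  have hBtop : B ≠ ⊤ := measure_ball_lt_top.ne
  have hdisj : (↑s : Set (EuclideanSpace ℝ (Fin n))).PairwiseDisjoint
      (fun z => closedBall z (ε / 2)) := by
    intro a ha b hb hab
    exact closedBall_disjoint_closedBall (by linarith [hsep ha hb hab])
  have hvol : ∀ z : EuclideanSpace ℝ (Fin n),
      μ (closedBall z (ε / 2)) = ENNReal.ofReal ((ε / 2) ^ n) * B := by
    intro z
    rw [Measure.addHaar_closedBall μ z (by positivity : (0:ℝ) ≤ ε / 2),
      finrank_euclideanSpace_fin]
  have hsum : μ (⋃ z ∈ s, closedBall z (ε / 2))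
      = (s.card : ENNReal) * (ENNReal.ofReal ((ε / 2) ^ n) * B) := by
    rw [measure_biUnion_finset hdisj fun b _ => measurableSet_closedBall]
    simp [hvol, Finset.sum_const, nsmul_eq_mul]
  have hsub : (⋃ z ∈ s, closedBall z (ε / 2))
      ⊆ closedBall (0 : EuclideanSpace ℝ (Fin n)) (1 + ε / 2) := by
    intro w hw
    simp only [Set.mem_iUnion, mem_closedBall] at hw ⊢
    obtain ⟨z, hz, hwz⟩ := hw
    have hz1 : dist z 0 ≤ 1 := hs hz
    calc dist w 0 ≤ dist w z + dist z 0 := dist_triangle _ _ _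
      _ ≤ ε / 2 + 1 := add_le_add hwz hz1
      _ = 1 + ε / 2 := by ring
  have hle : (s.card : ENNReal) * (ENNReal.ofReal ((ε / 2) ^ n) * B)
      ≤ ENNReal.ofReal ((1 + ε / 2) ^ n) * B := by
    rw [← hsum]
    refine le_trans (measure_mono hsub) (le_of_eq ?_)
    rw [Measure.addHaar_closedBall μ 0 (by positivity : (0:ℝ) ≤ 1 + ε / 2),
      finrank_euclideanSpace_fin]
  rw [← mul_assoc, ENNReal.mul_le_mul_iff_left hB0 hBtop] at hle
  have h2 : (s.card : ℝ) * (ε / 2) ^ n ≤ (1 + ε / 2) ^ n := by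
    rw [← ENNReal.ofReal_natCast, ← ENNReal.ofReal_mul (by positivity)] at hle
    exact (ENNReal.ofReal_le_ofReal_iff (by positivity)).mp hle
  have hpow : (0:ℝ) < (ε / 2) ^ n := by positivity
  have h4 : (1 + ε / 2) ^ n / (ε / 2) ^ n = (1 + 2 / ε) ^ n := by
    rw [← div_pow]; congr 1; field_simp; ring
  exact h4 ▸ (le_div_iff₀ hpow).mpr h2

lemma exists_net (n : ℕ) {ε : ℝ} (hε : 0 < ε) :
    ∃ s : Finset (EuclideanSpace ℝ (Fin n)),
      (↑s ⊆ closedBall (0 : EuclideanSpace ℝ (Fin n)) 1) ∧ ((s.card : ℝ) ≤ (1 + 2 / ε) ^ n) ∧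
      ∀ y ∈ closedBall (0 : EuclideanSpace ℝ (Fin n)) 1, ∃ z ∈ s, dist y z ≤ ε := by
  classical
  set P : Finset (EuclideanSpace ℝ (Fin n)) → Prop := fun s =>
    (↑s : Set (EuclideanSpace ℝ (Fin n))) ⊆ closedBall 0 1 ∧
    (↑s : Set (EuclideanSpace ℝ (Fin n))).Pairwise fun a b => ε < dist a b with hP
  set A : Set ℕ := {k | ∃ s, P s ∧ s.card = k} with hA
  have hA0 : (0 : ℕ) ∈ A := ⟨∅, ⟨by simp, by simp⟩, by simp⟩
  have hbdd : BddAbove A := by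
    refine ⟨⌈(1 + 2 / ε) ^ n⌉₊, fun k hk => ?_⟩
    obtain ⟨s, hs, rfl⟩ := hk
    have h1 : (s.card : ℝ) ≤ (1 + 2 / ε) ^ n := net_card_bound hε s hs.1 hs.2
    exact_mod_cast h1.trans (Nat.le_ceil _)
  obtain ⟨s, hPs, hcard⟩ := Nat.sSup_mem ⟨0, hA0⟩ hbdd
  refine ⟨s, hPs.1, net_card_bound hε s hPs.1 hPs.2, ?_⟩
  intro y hy
  by_contra hcon
  push_neg at hcon
  have hys : y ∉ s := fun hys => by
    have := hcon y hys
    simp at this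
    linarith
  have hP' : P (insert y s) := by
    constructor
    · rw [Finset.coe_insert]
      exact Set.insert_subset hy hPs.1
    · rw [Finset.coe_insert]
      refine Set.pairwise_insert.mpr ⟨hPs.2, fun b hb _ => ⟨?_, ?_⟩⟩
      · exact hcon b hb
      · rw [dist_comm]; exact hcon b hb
  have hle2 : (insert y s).card ≤ sSup A := le_csSup hbdd ⟨insert y s, hP', rfl⟩
  rw [Finset.card_insert_of_notMem hys, hcard] at hle2
  omega

lemma tensorProd_apply (n d : ℕ) (y : Fin d → EuclideanSpace ℝ (Fin n)) (i : Fin d → Fin n) :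
    tensorProd n d y i = ∏ l, y l (i l) := rfl

lemma tensorProd_norm (n d : ℕ) (y : Fin d → EuclideanSpace ℝ (Fin n)) :
    ‖tensorProd n d y‖ = ∏ l, ‖y l‖ := by
  have h1 : ∏ l, ∑ j, (y l j) ^ 2 = ∑ i : Fin d → Fin n, ∏ l, (y l (i l)) ^ 2 := by
    rw [Finset.prod_univ_sum, Fintype.piFinset_univ]
  have h2 : (∏ l, ‖y l‖) ^ 2 = ∏ l, ∑ j, (y l j) ^ 2 := by
    rw [← Finset.prod_pow]
    refine Finset.prod_congr rfl fun l _ => ?_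
    rw [EuclideanSpace.norm_eq, Real.sq_sqrt (by positivity)]
    simp [sq_abs]
  rw [EuclideanSpace.norm_eq]
  have h3 : ∑ i : Fin d → Fin n, ‖tensorProd n d y i‖ ^ 2
      = ∑ i : Fin d → Fin n, ∏ l, (y l (i l)) ^ 2 := by
    refine Finset.sum_congr rfl fun i _ => ?_
    rw [tensorProd_apply, Real.norm_eq_abs, sq_abs, ← Finset.prod_pow]
  rw [h3, ← h1, ← h2, Real.sqrt_sq (Finset.prod_nonneg fun l _ => norm_nonneg _)]

lemma tensorProd_expand (n d : ℕ) (z u : Fin d → EuclideanSpace ℝ (Fin n)) (ε : ℝ) :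
    tensorProd n d (fun l => z l + ε • u l)
      = ∑ S ∈ (Finset.univ : Finset (Fin d)).powerset,
          ε ^ S.card • tensorProd n d (fun l => if l ∈ S then u l else z l) := by
  ext i
  rw [WithLp.ofLp_sum, Finset.sum_apply]
  rw [tensorProd_apply]
  have hR : ∀ S : Finset (Fin d),
      (ε ^ S.card • tensorProd n d (fun l => if l ∈ S then u l else z l)) i
        = (∏ l ∈ S, ε * u l (i l)) * ∏ l ∈ Finset.univ \ S, z l (i l) := by
    intro S
    have : (ε ^ S.card • tensorProd n d (fun l => if l ∈ S then u l else z l)) i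
        = ε ^ S.card * ∏ l, (if l ∈ S then u l else z l) (i l) := rfl
    rw [this]
    have hsplit : ∏ l, (if l ∈ S then u l else z l) (i l)
        = (∏ l ∈ S, u l (i l)) * ∏ l ∈ Finset.univ \ S, z l (i l) := by
      rw [← Finset.prod_sdiff (Finset.subset_univ S), mul_comm]
      congr 1
      · exact Finset.prod_congr rfl fun l hl => by simp [hl]
      · exact Finset.prod_congr rfl fun l hl => by
          simp [(Finset.mem_sdiff.mp hl).2]
    rw [hsplit, ← mul_assoc]
    congr 1
    rw [Finset.prod_mul_distrib, Finset.prod_const]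
  calc ∏ l, (z l + ε • u l) (i l)
      = ∏ l, (ε * u l (i l) + z l (i l)) := by
        refine Finset.prod_congr rfl fun l _ => ?_
        show z l (i l) + ε * u l (i l) = _
        ring
    _ = ∑ S ∈ (Finset.univ : Finset (Fin d)).powerset,
          (∏ l ∈ S, ε * u l (i l)) * ∏ l ∈ Finset.univ \ S, z l (i l) :=
        Finset.prod_add _ _ _
    _ = _ := by
        refine (Finset.sum_congr rfl fun S _ => ?_).symm
        exact hR S

lemma mem_absConv_range_iff {V : Type*} [AddCommGroup V] [Module ℝ V] {M : ℕ}
    (x : Fin M → V) (z : V) :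
    z ∈ absConv (Set.range x) ↔ ∃ c : Fin M → ℝ, (∑ k, |c k|) ≤ 1 ∧ z = ∑ k, c k • x k := by
  constructor
  · rintro ⟨k, c, p, hp, hc, rfl⟩
    choose g hg using fun i => hp i
    classical
    refine ⟨fun m => ∑ i, if g i = m then c i else 0, ?_, ?_⟩
    · calc ∑ m, |∑ i, if g i = m then c i else 0|
          ≤ ∑ m, ∑ i, |if g i = m then c i else 0| :=
            Finset.sum_le_sum fun m _ => Finset.abs_sum_le_sum_abs _ _
        _ = ∑ i, ∑ m, |if g i = m then c i else 0| := Finset.sum_comm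
        _ = ∑ i, |c i| := by
            refine Finset.sum_congr rfl fun i _ => ?_
            rw [Finset.sum_eq_single (g i)]
            · simp
            · intro b _ hb; rw [if_neg fun h => hb h.symm]; simp
            · simp
        _ ≤ 1 := hc
    · calc ∑ i, c i • p i = ∑ i, c i • x (g i) := by
            refine Finset.sum_congr rfl fun i _ => by rw [hg]
        _ = ∑ i, ∑ m, (if g i = m then c i else 0) • x m := by
            refine Finset.sum_congr rfl fun i _ => ?_
            rw [Finset.sum_eq_single (g i)]
            · simp
            · intro b _ hb; rw [if_neg fun h => hb h.symm]; simp
            · simp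
        _ = ∑ m, (∑ i, if g i = m then c i else 0) • x m := by
            rw [Finset.sum_comm]
            refine Finset.sum_congr rfl fun m _ => ?_
            rw [Finset.sum_smul]
  · rintro ⟨c, hc, rfl⟩
    exact ⟨M, c, x, fun k => Set.mem_range_self k, hc, rfl⟩

lemma absConv_comb {V : Type*} [AddCommGroup V] [Module ℝ V] {M : ℕ} (x : Fin M → V)
    {ι : Type*} (s : Finset ι) (a : ι → ℝ) (v : ι → V)
    (hv : ∀ j ∈ s, v j ∈ absConv (Set.range x)) (ha : (∑ j ∈ s, |a j|) ≤ 1) :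
    (∑ j ∈ s, a j • v j) ∈ absConv (Set.range x) := by
  classical
  have hb : ∀ j ∈ s, ∃ b : Fin M → ℝ, (∑ k, |b k|) ≤ 1 ∧ v j = ∑ k, b k • x k := by
    intro j hj; exact (mem_absConv_range_iff x (v j)).mp (hv j hj)
  choose! b hb1 hb2 using hb
  rw [mem_absConv_range_iff]
  refine ⟨fun k => ∑ j ∈ s, a j * b j k, ?_, ?_⟩
  · calc ∑ k, |∑ j ∈ s, a j * b j k|
        ≤ ∑ k, ∑ j ∈ s, |a j| * |b j k| := by
          refine Finset.sum_le_sum fun k _ => ?_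
          refine (Finset.abs_sum_le_sum_abs _ _).trans ?_
          refine Finset.sum_le_sum fun j _ => le_of_eq (abs_mul _ _)
      _ = ∑ j ∈ s, |a j| * ∑ k, |b j k| := by
          rw [Finset.sum_comm]
          exact Finset.sum_congr rfl fun j _ => by rw [Finset.mul_sum]
      _ ≤ ∑ j ∈ s, |a j| * 1 := by
          refine Finset.sum_le_sum fun j hj => ?_
          exact mul_le_mul_of_nonneg_left (hb1 j hj) (abs_nonneg _)
      _ ≤ 1 := by simpa using ha
  · calc ∑ j ∈ s, a j • v j = ∑ j ∈ s, ∑ k, (a j * b j k) • x k := by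
          refine Finset.sum_congr rfl fun j hj => ?_
          rw [hb2 j hj, Finset.smul_sum]
          exact Finset.sum_congr rfl fun k _ => smul_smul _ _ _
      _ = ∑ k, (∑ j ∈ s, a j * b j k) • x k := by
          rw [Finset.sum_comm]
          exact Finset.sum_congr rfl fun k _ => (Finset.sum_smul).symm

lemma isClosed_absConv {N : Type*} [Fintype N] {M : ℕ}
    (x : Fin M → EuclideanSpace ℝ N) : IsClosed (absConv (Set.range x)) := by
  have himg : absConv (Set.range x)
      = (fun c : Fin M → ℝ => ∑ k, c k • x k) '' {c | (∑ k, |c k|) ≤ 1} := by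
    ext z
    rw [mem_absConv_range_iff]
    constructor
    · rintro ⟨c, hc, rfl⟩; exact ⟨c, hc, rfl⟩
    · rintro ⟨c, hc, rfl⟩; exact ⟨c, hc, rfl⟩
  rw [himg]
  have hcomp : IsCompact {c : Fin M → ℝ | (∑ k, |c k|) ≤ 1} := by
    have hclosed : IsClosed {c : Fin M → ℝ | (∑ k, |c k|) ≤ 1} := by
      have : Continuous fun c : Fin M → ℝ => ∑ k, |c k| :=
        continuous_finset_sum _ fun k _ => (continuous_apply k).abs
      exact isClosed_le this continuous_const
    have hbdd : Bornology.IsBounded {c : Fin M → ℝ | (∑ k, |c k|) ≤ 1} := by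
      rw [Metric.isBounded_iff_subset_closedBall 0]
      refine ⟨1, fun c hc => ?_⟩
      simp only [Metric.mem_closedBall, dist_zero_right]
      rw [pi_norm_le_iff_of_nonneg zero_le_one]
      intro k
      rw [Real.norm_eq_abs]
      exact le_trans (Finset.single_le_sum (f := fun k => |c k|)
        (fun k _ => abs_nonneg _) (Finset.mem_univ k)) hc
    exact Metric.isCompact_of_isClosed_isBounded hclosed hbdd
  have hcont : Continuous fun c : Fin M → ℝ => ∑ k, c k • x k :=
    continuous_finset_sum _ fun k _ => (continuous_apply k).smul continuous_const
  exact (hcomp.image hcont).isClosed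

lemma sum_powerset_pow (d : ℕ) (ε : ℝ) :
    ∑ S ∈ (Finset.univ : Finset (Fin d)).powerset, ε ^ S.card = (ε + 1) ^ d := by
  have h := Finset.prod_add (fun _ : Fin d => ε) (fun _ => 1) Finset.univ
  simp only [Finset.prod_const, one_pow, mul_one, Finset.card_univ, Fintype.card_fin] at h
  exact h.symm

end Aux

/-- Tensor net lemma. With `N = n^d` and `K ⊆ B₂^N` the absolute
convex hull of the rank-one tensors with factors in `B₂^n`, there exist `M`
rank-one tensors `x₁,…,x_M` of norm at most `1`, with `ln M ≤ 3nd(1 + ln d)`,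
such that `K ⊆ e · absconv{x₁,…,x_M}`. -/
theorem stmt7 (n d : ℕ) (hn : 0 < n) (hd : 0 < d) :
    ∃ (M : ℕ) (x : Fin M → EuclideanSpace ℝ (Fin d → Fin n)),
      (∀ k, ‖x k‖ ≤ 1) ∧
      (∀ k, ∃ y : Fin d → EuclideanSpace ℝ (Fin n),
        (∀ l, ‖y l‖ ≤ 1) ∧ x k = tensorProd n d y) ∧
      Real.log M ≤ 3 * n * d * (1 + Real.log d) ∧
      absConv {t | ∃ y : Fin d → EuclideanSpace ℝ (Fin n),
          (∀ l, ‖y l‖ ≤ 1) ∧ t = tensorProd n d y} ⊆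
        Real.exp 1 • absConv (Set.range x) := by
  classical
  set ε : ℝ := 1 / (3 * d) with hεdef
  have hε : 0 < ε := by positivity
  obtain ⟨s, hs_sub, hs_card, hs_cover⟩ := exists_net n hε
  -- the net is nonempty
  have hs_ne : s.Nonempty := by
    obtain ⟨z, hz, -⟩ := hs_cover 0 (Metric.mem_closedBall_self zero_le_one)
    exact ⟨z, hz⟩
  set M : ℕ := s.card ^ d with hMdef
  have hcardeq : Fintype.card (Fin d → {z // z ∈ s}) = M := by
    rw [Fintype.card_fun, Fintype.card_coe, Fintype.card_fin]
  set e := Fintype.equivFinOfCardEq hcardeq with hedef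
  set x : Fin M → EuclideanSpace ℝ (Fin d → Fin n) :=
    fun k => tensorProd n d fun l => ((e.symm k l : EuclideanSpace ℝ (Fin n))) with hxdef
  have hznorm : ∀ z ∈ s, ‖z‖ ≤ 1 := by
    intro z hz
    have := hs_sub hz
    rwa [Metric.mem_closedBall, dist_zero_right] at this
  have hx_rank : ∀ k, ∃ y : Fin d → EuclideanSpace ℝ (Fin n),
      (∀ l, ‖y l‖ ≤ 1) ∧ x k = tensorProd n d y := by
    intro k
    exact ⟨fun l => (e.symm k l : EuclideanSpace ℝ (Fin n)),
      fun l => hznorm _ (e.symm k l).2, rfl⟩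
  have hx_norm : ∀ k, ‖x k‖ ≤ 1 := by
    intro k
    rw [hxdef, tensorProd_norm]
    exact Finset.prod_le_one (fun l _ => norm_nonneg _)
      (fun l _ => hznorm _ (e.symm k l).2)
  -- the δ bound
  have hexp13 : Real.exp (1/3 : ℝ) ≤ 7/5 := by
    have h3 : Real.exp (1/3 : ℝ) ^ (3 : ℕ) = Real.exp 1 := by
      rw [← Real.exp_nat_mul]; norm_num
    nlinarith [Real.exp_one_lt_d9, Real.exp_pos (1/3 : ℝ), Real.exp_pos (1:ℝ),
      sq_nonneg (Real.exp (1/3 : ℝ) - 7/5)]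
  have hδbound : (ε + 1) ^ d - 1 ≤ 2/5 := by
    have h1 : (ε + 1) ^ d ≤ Real.exp ε ^ d :=
      pow_le_pow_left₀ (by positivity) (by linarith [Real.add_one_le_exp ε]) d
    have h2 : Real.exp ε ^ d = Real.exp (ε * (d:ℝ)) := by
      rw [← Real.exp_nat_mul]
      congr 1
      ring
    have h3 : ε * (d:ℝ) = 1/3 := by
      rw [hεdef]; field_simp
    rw [h2, h3] at h1
    linarith
  -- key induction
  have key : ∀ m : ℕ, ∀ y : Fin d → EuclideanSpace ℝ (Fin n), (∀ l, ‖y l‖ ≤ 1) →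
      ∃ c : Fin M → ℝ, (∑ k, |c k|) ≤ 5/3 ∧
        ‖tensorProd n d y - ∑ k, c k • x k‖ ≤ (2/5 : ℝ) ^ m := by
    intro m
    induction m with
    | zero =>
      intro y hy
      refine ⟨0, by simp <;> norm_num, ?_⟩
      simp only [pow_zero]
      have h0 : (∑ k, (0 : Fin M → ℝ) k • x k) = 0 := by simp
      rw [h0, sub_zero, tensorProd_norm]
      exact Finset.prod_le_one (fun l _ => norm_nonneg _) (fun l _ => hy l)
    | succ m ih =>
      intro y hy
      -- choose net points
      have hyb : ∀ l, y l ∈ Metric.closedBall (0 : EuclideanSpace ℝ (Fin n)) 1 := by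
        intro l; rw [Metric.mem_closedBall, dist_zero_right]; exact hy l
      choose z hzs hzd using fun l => hs_cover (y l) (hyb l)
      set u : Fin d → EuclideanSpace ℝ (Fin n) := fun l => ε⁻¹ • (y l - z l) with hudef
      have hyzu : ∀ l, y l = z l + ε • u l := by
        intro l
        show y l = z l + ε • (ε⁻¹ • (y l - z l))
        rw [smul_inv_smul₀ hε.ne']
        abel
      have hu_norm : ∀ l, ‖u l‖ ≤ 1 := by
        intro l
        rw [hudef]
        rw [norm_smul, Real.norm_eq_abs, abs_of_pos (inv_pos.mpr hε)]
        have : ‖y l - z l‖ ≤ ε := by rw [← dist_eq_norm]; exact hzd l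
        calc ε⁻¹ * ‖y l - z l‖ ≤ ε⁻¹ * ε :=
              mul_le_mul_of_nonneg_left this (inv_pos.mpr hε).le
          _ = 1 := inv_mul_cancel₀ hε.ne'
      -- expansion
      have hexp : tensorProd n d y
          = ∑ S ∈ (Finset.univ : Finset (Fin d)).powerset,
              ε ^ S.card • tensorProd n d (fun l => if l ∈ S then u l else z l) := by
        have : y = fun l => z l + ε • u l := funext hyzu
        rw [this]
        exact tensorProd_expand n d z u ε
      -- the empty set gives a net tensor
      set k₀ : Fin M := e (fun l => (⟨z l, hzs l⟩ : {w // w ∈ s})) with hk₀def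
      have ht_empty : tensorProd n d
          (fun l => if l ∈ (∅ : Finset (Fin d)) then u l else z l) = x k₀ := by
        rw [hxdef, hk₀def]
        simp only [Equiv.symm_apply_apply]
        congr 1
      -- apply IH to the nonempty subsets
      have hvnorm : ∀ S : Finset (Fin d), ∀ l, ‖(if l ∈ S then u l else z l)‖ ≤ 1 := by
        intro S l
        split_ifs
        · exact hu_norm l
        · exact hznorm _ (hzs l)
      choose cS hcS1 hcS2 using fun S : Finset (Fin d) => ih _ (hvnorm S)
      set P' := ((Finset.univ : Finset (Fin d)).powerset).erase ∅ with hP'def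
      have hempty_mem : (∅ : Finset (Fin d)) ∈ (Finset.univ : Finset (Fin d)).powerset := by
        simp
      have hsplit : tensorProd n d y = x k₀ + ∑ S ∈ P',
          ε ^ S.card • tensorProd n d (fun l => if l ∈ S then u l else z l) := by
        rw [hexp, ← Finset.add_sum_erase _ _ hempty_mem]
        simp only [Finset.card_empty, pow_zero, one_smul]
        rw [ht_empty]
      -- the total small mass
      have hmass : ∑ S ∈ P', ε ^ S.card ≤ 2/5 := by
        have := sum_powerset_pow d ε
        rw [← Finset.add_sum_erase _ _ hempty_mem] at this
        simp only [Finset.card_empty, pow_zero] at this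
        have h5 : ∑ S ∈ P', ε ^ S.card = (ε + 1) ^ d - 1 := by linarith
        linarith [hδbound, h5]
      have hmass' : ∑ S ∈ P', ε ^ S.card ≤ 2/5 := hmass
      set c : Fin M → ℝ :=
        fun k => (if k = k₀ then 1 else 0) + ∑ S ∈ P', ε ^ S.card * cS S k with hcdef
      have hmass_nonneg : ∀ S : Finset (Fin d), (0:ℝ) ≤ ε ^ S.card := fun S => by positivity
      refine ⟨c, ?_, ?_⟩
      · -- mass bound
        calc ∑ k, |c k|
            ≤ ∑ k, (|if k = k₀ then (1:ℝ) else 0| + |∑ S ∈ P', ε ^ S.card * cS S k|) :=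
              Finset.sum_le_sum fun k _ => abs_add_le _ _
          _ = (∑ k, |if k = k₀ then (1:ℝ) else 0|)
              + ∑ k, |∑ S ∈ P', ε ^ S.card * cS S k| := Finset.sum_add_distrib
          _ ≤ 1 + 2/5 * (5/3) := by
              have hA : (∑ k, |if k = k₀ then (1:ℝ) else 0|) = 1 := by
                rw [Finset.sum_eq_single k₀]
                · simp
                · intro b _ hb; rw [if_neg hb]; simp
                · simp
              have hB : ∑ k, |∑ S ∈ P', ε ^ S.card * cS S k| ≤ 2/5 * (5/3) := by
                calc ∑ k, |∑ S ∈ P', ε ^ S.card * cS S k|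
                    ≤ ∑ k, ∑ S ∈ P', ε ^ S.card * |cS S k| := by
                      refine Finset.sum_le_sum fun k _ => ?_
                      refine (Finset.abs_sum_le_sum_abs _ _).trans ?_
                      refine Finset.sum_le_sum fun S _ => ?_
                      rw [abs_mul, abs_of_nonneg (hmass_nonneg S)]
                  _ = ∑ S ∈ P', ε ^ S.card * ∑ k, |cS S k| := by
                      rw [Finset.sum_comm]
                      exact Finset.sum_congr rfl fun S _ => by rw [Finset.mul_sum]
                  _ ≤ ∑ S ∈ P', ε ^ S.card * (5/3) := by
                      refine Finset.sum_le_sum fun S _ => ?_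
                      exact mul_le_mul_of_nonneg_left (hcS1 S) (hmass_nonneg S)
                  _ = (∑ S ∈ P', ε ^ S.card) * (5/3) := by rw [Finset.sum_mul]
                  _ ≤ 2/5 * (5/3) := by
                      exact mul_le_mul_of_nonneg_right hmass' (by norm_num)
              linarith
          _ = 5/3 := by norm_num
      · -- error bound
        have hLc : ∑ k, c k • x k
            = x k₀ + ∑ S ∈ P', ε ^ S.card • (∑ k, cS S k • x k) := by
          rw [hcdef]
          simp only [add_smul, Finset.sum_add_distrib]
          congr 1
          · rw [Finset.sum_eq_single k₀]
            · simp
            · intro b _ hb; rw [if_neg hb]; simp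
            · simp
          · calc ∑ k, (∑ S ∈ P', ε ^ S.card * cS S k) • x k
                = ∑ k, ∑ S ∈ P', (ε ^ S.card * cS S k) • x k := by
                  refine Finset.sum_congr rfl fun k _ => Finset.sum_smul
              _ = ∑ S ∈ P', ∑ k, (ε ^ S.card * cS S k) • x k := Finset.sum_comm
              _ = ∑ S ∈ P', ε ^ S.card • ∑ k, cS S k • x k := by
                  refine Finset.sum_congr rfl fun S _ => ?_
                  rw [Finset.smul_sum]
                  exact Finset.sum_congr rfl fun k _ => (smul_smul _ _ _).symm
        rw [hsplit, hLc]
        have hdiff : x k₀ + (∑ S ∈ P',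
              ε ^ S.card • tensorProd n d (fun l => if l ∈ S then u l else z l))
            - (x k₀ + ∑ S ∈ P', ε ^ S.card • (∑ k, cS S k • x k))
            = ∑ S ∈ P', ε ^ S.card •
              (tensorProd n d (fun l => if l ∈ S then u l else z l)
                - ∑ k, cS S k • x k) := by
          rw [add_sub_add_left_eq_sub, ← Finset.sum_sub_distrib]
          refine Finset.sum_congr rfl fun S _ => ?_
          rw [smul_sub]
        rw [hdiff]
        calc ‖∑ S ∈ P', ε ^ S.card •
              (tensorProd n d (fun l => if l ∈ S then u l else z l) - ∑ k, cS S k • x k)‖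
            ≤ ∑ S ∈ P', ‖ε ^ S.card •
              (tensorProd n d (fun l => if l ∈ S then u l else z l) - ∑ k, cS S k • x k)‖ :=
              norm_sum_le _ _
          _ = ∑ S ∈ P', ε ^ S.card *
              ‖tensorProd n d (fun l => if l ∈ S then u l else z l) - ∑ k, cS S k • x k‖ := by
              refine Finset.sum_congr rfl fun S _ => ?_
              rw [norm_smul, Real.norm_eq_abs, abs_of_nonneg (hmass_nonneg S)]
          _ ≤ ∑ S ∈ P', ε ^ S.card * (2/5 : ℝ) ^ m := by
              refine Finset.sum_le_sum fun S _ => ?_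
              exact mul_le_mul_of_nonneg_left (hcS2 S) (hmass_nonneg S)
          _ = (∑ S ∈ P', ε ^ S.card) * (2/5 : ℝ) ^ m := by rw [Finset.sum_mul]
          _ ≤ 2/5 * (2/5 : ℝ) ^ m := by
              exact mul_le_mul_of_nonneg_right hmass' (by positivity)
          _ = (2/5 : ℝ) ^ (m + 1) := by rw [pow_succ]; ring
  -- every rank-one tensor is in e • absConv (range x)
  have hrank_mem : ∀ y : Fin d → EuclideanSpace ℝ (Fin n), (∀ l, ‖y l‖ ≤ 1) →
      (Real.exp 1)⁻¹ • tensorProd n d y ∈ absConv (Set.range x) := by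
    intro y hy
    have hclosed := isClosed_absConv x
    rw [← hclosed.closure_eq]
    rw [Metric.mem_closure_iff]
    intro η hη
    obtain ⟨m, hm⟩ := exists_pow_lt_of_lt_one hη (by norm_num : (2/5 : ℝ) < 1)
    obtain ⟨c, hc1, hc2⟩ := key m y hy
    refine ⟨∑ k, ((Real.exp 1)⁻¹ * c k) • x k, ?_, ?_⟩
    · rw [mem_absConv_range_iff]
      refine ⟨fun k => (Real.exp 1)⁻¹ * c k, ?_, rfl⟩
      have hinv : (0:ℝ) < (Real.exp 1)⁻¹ := inv_pos.mpr (Real.exp_pos 1)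
      calc ∑ k, |(Real.exp 1)⁻¹ * c k| = (Real.exp 1)⁻¹ * ∑ k, |c k| := by
            rw [Finset.mul_sum]
            exact Finset.sum_congr rfl fun k _ => by
              rw [abs_mul, abs_of_pos hinv]
        _ ≤ (Real.exp 1)⁻¹ * (5/3) :=
            mul_le_mul_of_nonneg_left hc1 hinv.le
        _ ≤ 1 := by
            rw [inv_mul_le_iff₀ (Real.exp_pos 1), mul_one]
            linarith [Real.exp_one_gt_d9]
    · rw [dist_eq_norm]
      have heq : (Real.exp 1)⁻¹ • tensorProd n d y - ∑ k, ((Real.exp 1)⁻¹ * c k) • x k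
          = (Real.exp 1)⁻¹ • (tensorProd n d y - ∑ k, c k • x k) := by
        rw [smul_sub]
        congr 1
        rw [Finset.smul_sum]
        exact Finset.sum_congr rfl fun k _ => by rw [smul_smul]
      rw [heq, norm_smul, Real.norm_eq_abs,
        abs_of_pos (inv_pos.mpr (Real.exp_pos 1))]
      have hinvle : (Real.exp 1)⁻¹ ≤ 1 := by
        rw [inv_le_one_iff₀]
        right
        linarith [Real.exp_one_gt_d9]
      calc (Real.exp 1)⁻¹ * ‖tensorProd n d y - ∑ k, c k • x k‖
          ≤ 1 * (2/5 : ℝ) ^ m := by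
            exact mul_le_mul hinvle hc2 (norm_nonneg _) zero_le_one
        _ = (2/5 : ℝ) ^ m := one_mul _
        _ < η := hm
  -- log bound
  have hlog : Real.log M ≤ 3 * n * d * (1 + Real.log d) := by
    have hcard1 : 1 ≤ s.card := hs_ne.card_pos
    have hMcast : (M : ℝ) = (s.card : ℝ) ^ d := by
      rw [hMdef]; push_cast; ring
    rw [hMcast, Real.log_pow]
    have hlogcard : Real.log s.card ≤ n * (3 * (1 + Real.log d)) := by
      have h1 : (1 : ℝ) + 2 / ε = 1 + 6 * d := by
        rw [hεdef]
        field_simp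
        ring
      have h2 : (s.card : ℝ) ≤ (1 + 6 * d) ^ n := by rw [← h1]; exact hs_card
      have hd1 : (1:ℝ) ≤ d := by exact_mod_cast hd
      have h3 : Real.log s.card ≤ n * Real.log (1 + 6 * d) := by
        calc Real.log s.card ≤ Real.log ((1 + 6 * d) ^ n) :=
              Real.log_le_log (by exact_mod_cast hcard1) h2
          _ = n * Real.log (1 + 6 * d) := by rw [Real.log_pow]
      refine h3.trans ?_
      have h4 : Real.log (1 + 6 * d) ≤ 3 * (1 + Real.log d) := by
        rw [Real.log_le_iff_le_exp (by linarith)]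
        have h5 : Real.exp (3 * (1 + Real.log d)) = Real.exp 3 * d ^ (3:ℕ) := by
          rw [show (3:ℝ) * (1 + Real.log d) = 3 + 3 * Real.log d by ring,
            Real.exp_add]
          congr 1
          rw [show (3:ℝ) * Real.log d = Real.log (d ^ (3:ℕ)) by
            rw [Real.log_pow]; push_cast; ring]
          rw [Real.exp_log (by positivity)]
        rw [h5]
        have hexp3 : (19:ℝ) ≤ Real.exp 3 := by
          have he3 : Real.exp 3 = Real.exp 1 ^ (3:ℕ) := by
            rw [← Real.exp_nat_mul]; norm_num
          have h27 : (2.7:ℝ) ≤ Real.exp 1 := by linarith [Real.exp_one_gt_d9]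
          rw [he3]
          calc (19:ℝ) ≤ 2.7 ^ (3:ℕ) := by norm_num
            _ ≤ Real.exp 1 ^ (3:ℕ) := pow_le_pow_left₀ (by norm_num) h27 3
        have hd3 : (d:ℝ) ≤ (d:ℝ) ^ (3:ℕ) := by
          calc (d:ℝ) = d * 1 * 1 := by ring
            _ ≤ d * d * d := by
                refine mul_le_mul (mul_le_mul le_rfl hd1 zero_le_one (by positivity))
                  hd1 zero_le_one (by positivity)
            _ = (d:ℝ) ^ (3:ℕ) := by ring
        nlinarith
      have hn0 : (0:ℝ) ≤ n := by positivity
      exact mul_le_mul_of_nonneg_left h4 hn0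
    calc (d : ℝ) * Real.log s.card ≤ d * (n * (3 * (1 + Real.log d))) := by
          refine mul_le_mul_of_nonneg_left hlogcard (by positivity)
      _ = 3 * n * d * (1 + Real.log d) := by ring
  refine ⟨M, x, hx_norm, hx_rank, hlog, ?_⟩
  -- the inclusion
  intro w hw
  obtain ⟨J, a, p, hp, ha, rfl⟩ := hw
  rw [Set.mem_smul_set_iff_inv_smul_mem₀ (Real.exp_ne_zero 1)]
  have heq : (Real.exp 1)⁻¹ • ∑ i, a i • p i
      = ∑ i, a i • ((Real.exp 1)⁻¹ • p i) := by
    rw [Finset.smul_sum]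
    exact Finset.sum_congr rfl fun i _ => smul_comm _ _ _
  rw [heq]
  refine absConv_comb x Finset.univ a (fun i => (Real.exp 1)⁻¹ • p i) ?_ ha
  intro i _
  obtain ⟨y, hy, hpy⟩ := hp i
  show (Real.exp 1)⁻¹ • p i ∈ absConv (Set.range x)
  rw [hpy]
  exact hrank_mem y hy
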